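/- The matrix M defined in the coupled TPBVP (with blocks −Â, S_i, Q_i, Â^⊤ as above) is defective: the geometric multiplicity of its zero eigenvalue is m(m−1), strictly less than its algebraic multiplicity 2m(m−1) (for m ≥ 2). -/

import Mathlib

open Matrix Kronecker Polynomial

/-- `Â = [[0,1],[0,0]] ⊗ I_m`. -/
noncomputable def AhatM (m : ℕ) : Matrix (Fin 2 × Fin m) (Fin 2 × Fin m) ℝ :=
  !![(0:ℝ),1;0,0] ⊗ₖ (1 : Matrix (Fin m) (Fin m) ℝ)

/-- `S_i = [[0,0],[0,1]] ⊗ (1/r_i) b_i b_iᵀ`. -/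
noncomputable def SM (m : ℕ) (r : Fin m → ℝ) (i : Fin m) :
    Matrix (Fin 2 × Fin m) (Fin 2 × Fin m) ℝ :=
  !![(0:ℝ),0;0,1] ⊗ₖ ((1 / r i) • Matrix.single i i (1:ℝ))

/-- `Q_i = [[1,τ],[τ,τ²+1]] ⊗ diag(0,…,μ_i,…,0)`. -/
noncomputable def QM (m : ℕ) (μ : Fin m → ℝ) (τ : ℝ) (i : Fin m) :
    Matrix (Fin 2 × Fin m) (Fin 2 × Fin m) ℝ :=
  !![(1:ℝ), τ; τ, τ^2+1] ⊗ₖ Matrix.diagonal (fun j => if j = i then μ i else 0)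

/-- The TPBVP block matrix `M`, indexed with `Option (Fin m)` for the `m+1` block
rows/columns (`none` is the first block), each block of size `2m`. -/
noncomputable def MM (m : ℕ) (r μ : Fin m → ℝ) (τ : ℝ) :
    Matrix (Option (Fin m) × (Fin 2 × Fin m)) (Option (Fin m) × (Fin 2 × Fin m)) ℝ :=
  fun p q =>
    match p.1, q.1 with
    | none, none => (-(AhatM m)) p.2 q.2
    | none, some j => SM m r j p.2 q.2
    | some i, none => QM m μ τ i p.2 q.2
    | some i, some j => if i = j then (AhatM m)ᵀ p.2 q.2 else 0

/-! ### Auxiliary definitions for the block decomposition of `MM` -/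

set_option linter.unnecessarySeqFocus false
set_option linter.unreachableTactic false
set_option linter.unusedTactic false

/-- Index type for the off-diagonal positions. -/
abbrev al (m : ℕ) := {p : Fin m × Fin m // p.2 ≠ p.1}

/-- The nontrivial `4×4` diagonal blocks. -/
noncomputable def Bmat {m : ℕ} (r μ : Fin m → ℝ) (τ : ℝ) (i : Fin m) : Matrix (Fin 4) (Fin 4) ℝ :=
  !![0,-1,0,0; 0,0,0,1/r i; μ i, τ*μ i, 0, 0; τ*μ i, (τ^2+1)*μ i, 1, 0]

/-- The nilpotent `2×2` block. -/
def n2 : Matrix (Fin 2) (Fin 2) ℝ := !![0,0;1,0]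

/-- Reindexing equivalence exhibiting the block structure of `MM`. -/
def emb (m : ℕ) : (Fin 2 × al m) ⊕ (Fin 4 × Fin m) ≃ (Option (Fin m) × (Fin 2 × Fin m)) where
  toFun x := match x with
    | .inl (a, p) => (some p.1.1, (a, p.1.2))
    | .inr (k, i) => ![(none,((0:Fin 2),i)), (none,(1,i)), (some i,((0:Fin 2),i)), (some i,(1,i))] k
  invFun q := match q with
    | (none, (a,j)) => .inr (⟨a.val, by omega⟩, j)
    | (some i, (a,j)) => if hj : j = i then .inr (⟨a.val+2, by omega⟩, i) else .inl (a, ⟨(i,j), hj⟩)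
  left_inv x := by
    match x with
    | .inl (a, ⟨(i,j), hj⟩) => simp [hj]
    | .inr (k, i) => fin_cases k <;> simp
  right_inv q := by
    match q with
    | (none, (a,j)) => fin_cases a <;> rfl
    | (some i, (a,j)) =>
      by_cases hj : j = i
      · subst hj; simp only [dif_pos rfl]; fin_cases a <;> rfl
      · simp only [dif_neg hj]

section EntryLemmas

variable {m : ℕ} (r μ : Fin m → ℝ) (τ : ℝ)

lemma MM_nn (a a' : Fin 2) (j j' : Fin m) :
    MM m r μ τ (none,(a,j)) (none,(a',j')) = if a = 0 ∧ a' = 1 ∧ j = j' then -1 else 0 := by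
  fin_cases a <;> fin_cases a' <;>
    simp [MM, AhatM, Matrix.one_apply] <;> split_ifs <;> simp_all

lemma MM_ns (a a' : Fin 2) (j : Fin m) (i j' : Fin m) :
    MM m r μ τ (none,(a,j)) (some i,(a',j')) =
      if a = 1 ∧ a' = 1 ∧ i = j ∧ i = j' then 1 / r i else 0 := by
  fin_cases a <;> fin_cases a' <;>
    simp [MM, SM, Matrix.single, Matrix.of_apply] <;> split_ifs <;> simp_all

lemma MM_sn (a a' : Fin 2) (i j j' : Fin m) :
    MM m r μ τ (some i,(a,j)) (none,(a',j')) =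
      if j = i ∧ j' = i then !![(1:ℝ), τ; τ, τ^2+1] a a' * μ i else 0 := by
  by_cases h1 : j = j' <;> by_cases h2 : j = i <;>
    simp_all [MM, QM, Matrix.diagonal_apply] <;> (try split_ifs) <;> (try intro) <;> simp_all [eq_comm]

lemma MM_ss (a a' : Fin 2) (i j i' j' : Fin m) :
    MM m r μ τ (some i,(a,j)) (some i',(a',j')) =
      if i = i' ∧ j = j' ∧ a = 1 ∧ a' = 0 then 1 else 0 := by
  fin_cases a <;> fin_cases a' <;>
    simp [MM, AhatM, Matrix.one_apply] <;> split_ifs <;> simp_all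

end EntryLemmas

set_option maxHeartbeats 1000000 in
/-- The reindexed `MM` is block triangular with a nilpotent block and `4×4` diagonal blocks. -/
lemma key (m : ℕ) (r μ : Fin m → ℝ) (τ : ℝ) :
    (MM m r μ τ).submatrix (emb m) (emb m) =
      fromBlocks (blockDiagonal fun _ : al m => n2)
        (Matrix.of fun w c => MM m r μ τ (emb m (.inl w)) (emb m (.inr c))) 0
        (blockDiagonal (Bmat r μ τ)) := by
  funext x y
  match x, y with
  | .inl (a, ⟨(i,j), hij⟩), .inl (a', ⟨(i',j'), hij'⟩) =>
    show MM m r μ τ (some i,(a,j)) (some i',(a',j')) = _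
    rw [MM_ss]
    simp only [fromBlocks_apply₁₁, blockDiagonal_apply, Subtype.mk.injEq, Prod.mk.injEq, n2]
    rcases eq_or_ne i i' with rfl | hii <;> rcases eq_or_ne j j' with rfl | hjj <;>
      fin_cases a <;> fin_cases a' <;> simp_all
  | .inl w, .inr c => rfl
  | .inr (k, i), .inl (a', ⟨(i',j'), hij'⟩) =>
    have h2 : j' ≠ i' := hij'
    simp only [fromBlocks_apply₂₁, Matrix.zero_apply, submatrix_apply]
    fin_cases k <;>
      simp [emb, MM_nn, MM_ns, MM_sn, MM_ss] <;> (try split_ifs) <;> (try intros) <;>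
      (try subst_vars) <;> simp_all
  | .inr (k, i), .inr (l, i') =>
    simp only [fromBlocks_apply₂₂, submatrix_apply, blockDiagonal_apply]
    fin_cases k <;> fin_cases l <;>
      rcases eq_or_ne i i' with rfl | hii <;>
      simp [emb, MM_nn, MM_ns, MM_sn, MM_ss, Bmat] <;>
      (try split_ifs) <;> (try intros) <;> (try subst_vars) <;> (try simp_all) <;> (try ring) <;>
      (try simp [Matrix.vecHead, Matrix.vecTail])

/-! ### Charpoly computations -/

lemma charmatrix_blockDiagonal {o n' : Type*} [DecidableEq o] [Fintype o] [DecidableEq n']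
    [Fintype n'] (d : o → Matrix n' n' ℝ) :
    charmatrix (blockDiagonal d) = blockDiagonal (fun i => charmatrix (d i)) := by
  ext ⟨a, i⟩ ⟨b, j⟩
  by_cases hij : i = j
  · subst hij
    by_cases hab : a = b <;>
      simp [hab, charmatrix_apply, blockDiagonal_apply, diagonal_apply, Prod.ext_iff]
  · simp [charmatrix_apply, blockDiagonal_apply, diagonal_apply, Prod.ext_iff, hij]

lemma charpoly_blockDiagonal {o n' : Type*} [DecidableEq o] [Fintype o] [DecidableEq n']
    [Fintype n'] (d : o → Matrix n' n' ℝ) :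
    (blockDiagonal d).charpoly = ∏ i, (d i).charpoly := by
  rw [Matrix.charpoly, charmatrix_blockDiagonal, det_blockDiagonal]; rfl

lemma charpoly_n2 : n2.charpoly = X ^ 2 := by
  rw [Matrix.charpoly, Matrix.det_fin_two]
  simp [charmatrix_apply, n2]
  ring

lemma det_Bmat {m : ℕ} (r μ : Fin m → ℝ) (τ : ℝ) (i : Fin m) :
    (Bmat r μ τ i).det = μ i * (1 / r i) := by
  simp [Bmat, Matrix.det_succ_row_zero, Fin.sum_univ_succ, Fin.succAbove]
  ring

lemma eval_zero_charpoly (A : Matrix (Fin 4) (Fin 4) ℝ) :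
    A.charpoly.eval 0 = A.det := by
  rw [← Polynomial.coeff_zero_eq_eval_zero, Matrix.det_eq_sign_charpoly_coeff]
  norm_num

lemma card_al (m : ℕ) : Fintype.card (al m) = m * m - m := by
  have h1 : Fintype.card {p : Fin m × Fin m // p.2 = p.1} = m := by
    rw [Fintype.card_eq.mpr ⟨⟨fun s => s.1.1, fun i => ⟨(i,i),rfl⟩,
      fun s => by obtain ⟨⟨i,j⟩,h⟩ := s; cases h; rfl, fun i => rfl⟩⟩, Fintype.card_fin]
  have := Fintype.card_subtype_compl (α := Fin m × Fin m) (p := fun p => p.2 = p.1)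
  simp only [Fintype.card_prod, Fintype.card_fin, h1] at this
  exact this

lemma rm_X_pow (k : ℕ) : rootMultiplicity (0:ℝ) (X ^ k) = k := by
  induction k with
  | zero => simpa using rootMultiplicity_eq_zero (p := (1 : ℝ[X])) (x := 0) (by simp [IsRoot])
  | succ n ih =>
    have hX : rootMultiplicity (0:ℝ) X = 1 := by
      simpa using rootMultiplicity_X_sub_C_self (x := (0:ℝ))
    rw [pow_succ, rootMultiplicity_mul (mul_ne_zero (pow_ne_zero _ X_ne_zero) X_ne_zero), ih, hX]

lemma charpoly_MM (m : ℕ) (r μ : Fin m → ℝ) (τ : ℝ) :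
    (MM m r μ τ).charpoly = X ^ (2 * (m * m - m)) * ∏ i, (Bmat r μ τ i).charpoly := by
  have hsub : (MM m r μ τ).submatrix (emb m) (emb m) =
      reindex (emb m).symm (emb m).symm (MM m r μ τ) := by
    simp [reindex_apply]
  rw [← Matrix.charpoly_reindex (emb m).symm (MM m r μ τ), ← hsub, key,
    charpoly_fromBlocks_zero₂₁, charpoly_blockDiagonal, charpoly_blockDiagonal, charpoly_n2,
    Finset.prod_const, Finset.card_univ, card_al, ← pow_mul]

/-! ### The kernel -/

lemma mem_ker_iff {m : ℕ} (D : Matrix (Fin 4 × Fin m) (Fin 4 × Fin m) ℝ)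
    (hD : Function.Injective D.mulVec)
    (Bblk : Matrix (Fin 2 × al m) (Fin 4 × Fin m) ℝ)
    (v : ((Fin 2 × al m) ⊕ (Fin 4 × Fin m)) → ℝ) :
    (fromBlocks (blockDiagonal fun _ : al m => n2) Bblk 0 D).mulVec v = 0 ↔
      (∀ c, v (.inr c) = 0) ∧ ∀ p : al m, v (.inl (0, p)) = 0 := by
  constructor
  · intro h
    have hrow : ∀ c, D.mulVec (fun c' => v (.inr c')) c = 0 := by
      intro c
      have h0 := congrFun h (.inr c)
      simp only [mulVec, dotProduct, Fintype.sum_sum_type, fromBlocks_apply₂₁,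
        fromBlocks_apply₂₂, Matrix.zero_apply, zero_mul, Finset.sum_const_zero, zero_add,
        Pi.zero_apply] at h0
      exact h0
    have hvr : (fun c' => v (.inr c')) = 0 := by
      apply hD
      rw [Matrix.mulVec_zero]
      funext c; exact hrow c
    have hvr' : ∀ c, v (.inr c) = 0 := fun c => congrFun hvr c
    refine ⟨hvr', fun p => ?_⟩
    have h1 := congrFun h (.inl (1, p))
    simp only [mulVec, dotProduct, Fintype.sum_sum_type, fromBlocks_apply₁₁,
      fromBlocks_apply₁₂, Pi.zero_apply, Fintype.sum_prod_type, blockDiagonal_apply,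
      ite_mul, zero_mul, Finset.sum_ite_eq, Finset.sum_ite_eq', Finset.mem_univ, if_true,
      Fin.sum_univ_two] at h1
    rw [Finset.sum_eq_zero (fun k _ => Finset.sum_eq_zero
      (fun i _ => by rw [hvr' (k, i), mul_zero])), add_zero] at h1
    simpa [n2] using h1
  · rintro ⟨h1, h2⟩
    funext x
    cases x with
    | inl w =>
      obtain ⟨a, p⟩ := w
      simp only [mulVec, dotProduct, Fintype.sum_sum_type, fromBlocks_apply₁₁,
        fromBlocks_apply₁₂, Pi.zero_apply, Fintype.sum_prod_type, blockDiagonal_apply,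
        ite_mul, zero_mul, Finset.sum_ite_eq, Finset.sum_ite_eq', Finset.mem_univ, if_true,
        Fin.sum_univ_two]
      rw [Finset.sum_eq_zero (fun k _ => Finset.sum_eq_zero
        (fun i _ => by rw [h1 (k, i), mul_zero]))]
      fin_cases a <;> simp [n2, h2]
    | inr c =>
      simp only [mulVec, dotProduct, Fintype.sum_sum_type, fromBlocks_apply₂₁,
        fromBlocks_apply₂₂, Matrix.zero_apply, zero_mul, Finset.sum_const_zero, zero_add,
        Pi.zero_apply]
      exact Finset.sum_eq_zero fun c' _ => by rw [h1 c', mul_zero]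

lemma Dinj {m : ℕ} (r μ : Fin m → ℝ) (τ : ℝ) (hr : ∀ i, 0 < r i) (hμ : ∀ i, 0 < μ i) :
    Function.Injective (blockDiagonal (Bmat r μ τ)).mulVec := by
  rw [Matrix.mulVec_injective_iff_isUnit, Matrix.isUnit_iff_isUnit_det, det_blockDiagonal]
  refine isUnit_iff_ne_zero.mpr (Finset.prod_ne_zero_iff.mpr fun i _ => ?_)
  rw [det_Bmat]
  have := hr i; have := hμ i
  positivity

/-- The kernel of the reindexed matrix is equivalent to `al m → ℝ`. -/
noncomputable def kerEq {m : ℕ} (D : Matrix (Fin 4 × Fin m) (Fin 4 × Fin m) ℝ)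
    (hD : Function.Injective D.mulVec)
    (Bblk : Matrix (Fin 2 × al m) (Fin 4 × Fin m) ℝ) :
    (LinearMap.ker (fromBlocks (blockDiagonal fun _ : al m => n2) Bblk 0
        D).mulVecLin) ≃ₗ[ℝ] (al m → ℝ) where
  toFun v := fun p => v.1 (.inl (1, p))
  map_add' _ _ := rfl
  map_smul' _ _ := rfl
  invFun f := ⟨Sum.elim (fun w => if w.1 = 1 then f w.2 else 0) 0, by
    rw [LinearMap.mem_ker, Matrix.mulVecLin_apply, mem_ker_iff D hD]
    exact ⟨fun c => rfl, fun p => by simp⟩⟩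
  left_inv v := by
    obtain ⟨hc, hp⟩ := (mem_ker_iff D hD Bblk v.1).mp
      (by have h := LinearMap.mem_ker.mp v.2; rwa [Matrix.mulVecLin_apply] at h)
    apply Subtype.ext
    funext x
    cases x with
    | inl w =>
      obtain ⟨a, p⟩ := w
      fin_cases a
      · simpa using (hp p).symm
      · rfl
    | inr c => exact (hc c).symm
  right_inv f := by funext p; simp

lemma nat_sq_sub (m : ℕ) : m * m - m = m * (m - 1) := by
  cases m with
  | zero => simp
  | succ k => rw [Nat.mul_succ, Nat.add_sub_cancel, Nat.succ_sub_one]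

/-- `M` is defective: the geometric multiplicity `m(m−1)` of the eigenvalue `0` is
strictly less than its algebraic multiplicity `2m(m−1)` (for `m ≥ 2`). -/
theorem MM_defective (m : ℕ) (hm : 2 ≤ m) (r μ : Fin m → ℝ) (τ : ℝ)
    (hr : ∀ i, 0 < r i) (hμ : ∀ i, 0 < μ i) :
    Module.finrank ℝ (LinearMap.ker (Matrix.mulVecLin (MM m r μ τ))) = m * (m - 1) ∧
    (MM m r μ τ).charpoly.rootMultiplicity 0 = 2 * m * (m - 1) ∧
    m * (m - 1) < 2 * m * (m - 1) := by
  have hmm1 := nat_sq_sub m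
  have hpos2 : 0 < m * (m - 1) := Nat.mul_pos (by omega) (by omega)
  -- kernel dimension
  have hk := key m r μ τ
  have h1 : Module.finrank ℝ (LinearMap.ker
      (((MM m r μ τ).submatrix (emb m) (emb m)).mulVecLin)) = m * m - m := by
    rw [hk]
    rw [LinearEquiv.finrank_eq (kerEq _ (Dinj r μ τ hr hμ) _), Module.finrank_pi, card_al]
  have h2 : Module.finrank ℝ (LinearMap.ker ((MM m r μ τ).mulVecLin)) =
      Module.finrank ℝ (LinearMap.ker
        (((MM m r μ τ).submatrix (emb m) (emb m)).mulVecLin)) := by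
    have r1 := LinearMap.finrank_range_add_finrank_ker ((MM m r μ τ).mulVecLin)
    have r2 := LinearMap.finrank_range_add_finrank_ker
      (((MM m r μ τ).submatrix (emb m) (emb m)).mulVecLin)
    have hrk : Module.finrank ℝ (LinearMap.range
        (((MM m r μ τ).submatrix (emb m) (emb m)).mulVecLin)) =
        Module.finrank ℝ (LinearMap.range ((MM m r μ τ).mulVecLin)) :=
      Matrix.rank_submatrix (MM m r μ τ) (emb m) (emb m)
    rw [Module.finrank_pi] at r1 r2
    have hc : Fintype.card (Option (Fin m) × (Fin 2 × Fin m)) =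
        Fintype.card ((Fin 2 × al m) ⊕ (Fin 4 × Fin m)) := Fintype.card_congr (emb m).symm
    omega
  -- charpoly
  have hprod : (∏ i, (Bmat r μ τ i).charpoly).eval 0 = ∏ i, (μ i * (1 / r i)) := by
    rw [Polynomial.eval_prod]
    exact Finset.prod_congr rfl fun i _ => by rw [eval_zero_charpoly, det_Bmat]
  have hpos : 0 < ∏ i, (μ i * (1 / r i)) :=
    Finset.prod_pos fun i _ => by have := hr i; have := hμ i; positivity
  have hqne : (∏ i, (Bmat r μ τ i).charpoly) ≠ 0 := by
    intro h
    rw [h] at hprod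
    simp only [Polynomial.eval_zero] at hprod
    exact absurd hprod.symm (ne_of_gt hpos)
  have hnr : ¬ (∏ i, (Bmat r μ τ i).charpoly).IsRoot 0 := by
    intro h
    rw [Polynomial.IsRoot] at h
    rw [hprod] at h
    exact absurd h (ne_of_gt hpos)
  refine ⟨h2.trans (h1.trans hmm1), ?_, ?_⟩
  · rw [charpoly_MM, rootMultiplicity_mul
      (mul_ne_zero (pow_ne_zero _ Polynomial.X_ne_zero) hqne), rm_X_pow,
      rootMultiplicity_eq_zero hnr, add_zero, hmm1, ← mul_assoc]
  · rw [mul_assoc]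
    exact lt_two_mul_self hpos2
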